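/- arXiv:1912.12415 — 8 statements merged into one kernel-verified Lean document; each statement's English description precedes it below -/
import Mathlib

section
/- Let G be a group and let α be a tensor commuting automorphism of G. Then for all x, y ∈ G, one has x ⊗ α(y) = (y ⊗ α(x))⁻¹ in the non-abelian tensor square G ⊗ G. -/
/-!
Non-abelian tensor square `G ⊗ G`, constructed as the presented group on
symbols `g ⊗ h` with the defining relations
`g*g' ⊗ h = (g^{g'} ⊗ h^{g'}) * (g' ⊗ h)` and
`g ⊗ h*h' = (g ⊗ h') * (g^{h'} ⊗ h^{h'})`, where `a ^ b = b⁻¹ * a * b`.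
-/

variable {G : Type*} [Group G]

/-- Defining relations of the non-abelian tensor square `G ⊗ G`. -/
def tensorRels (G : Type*) [Group G] : Set (FreeGroup (G × G)) :=
  {r | (∃ g g' h : G,
      r = FreeGroup.of (g * g', h) *
        (FreeGroup.of (g'⁻¹ * g * g', g'⁻¹ * h * g') * FreeGroup.of (g', h))⁻¹) ∨
    (∃ g h h' : G,
      r = FreeGroup.of (g, h * h') *
        (FreeGroup.of (g, h') * FreeGroup.of (h'⁻¹ * g * h', h'⁻¹ * h * h'))⁻¹)}

/-- The non-abelian tensor square `G ⊗ G`. -/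
abbrev TensorSquare (G : Type*) [Group G] := PresentedGroup (tensorRels G)

/-- The tensor `g ⊗ h` as an element of `G ⊗ G`. -/
def tmul (g h : G) : TensorSquare G := PresentedGroup.of (g, h)

theorem tensorRels_eq_one {r : FreeGroup (G × G)} (hr : r ∈ tensorRels G) :
    PresentedGroup.mk (tensorRels G) r = 1 :=
  (QuotientGroup.eq_one_iff r).mpr (Subgroup.subset_normalClosure hr)

/-- The first defining relation of `G ⊗ G`. -/
theorem tmul_rel₁ (g g' h : G) :
    tmul (g * g') h = tmul (g'⁻¹ * g * g') (g'⁻¹ * h * g') * tmul g' h := by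
  have h1 := tensorRels_eq_one (G := G) (Or.inl ⟨g, g', h, rfl⟩)
  rw [map_mul, map_inv, map_mul, mul_inv_eq_one] at h1
  exact h1

/-- The second defining relation of `G ⊗ G`. -/
theorem tmul_rel₂ (g h h' : G) :
    tmul g (h * h') = tmul g h' * tmul (h'⁻¹ * g * h') (h'⁻¹ * h * h') := by
  have h1 := tensorRels_eq_one (G := G) (Or.inr ⟨g, h, h', rfl⟩)
  rw [map_mul, map_inv, map_mul, mul_inv_eq_one] at h1
  exact h1

/-- The action of `x : G` on `G ⊗ G`, determined by `(g ⊗ h) ^ x = (x⁻¹*g*x) ⊗ (x⁻¹*h*x)`. -/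
def tensorAct (x : G) : TensorSquare G →* TensorSquare G :=
  PresentedGroup.toGroup
    (f := fun p : G × G => tmul (x⁻¹ * p.1 * x) (x⁻¹ * p.2 * x))
    (by
      rintro r (⟨g, g', h, rfl⟩ | ⟨g, h, h', rfl⟩) <;>
        simp only [map_mul, map_inv, FreeGroup.lift_apply_of, mul_inv_eq_one]
      · have := tmul_rel₁ (x⁻¹ * g * x) (x⁻¹ * g' * x) (x⁻¹ * h * x)
        convert this using 2 <;> group
      · have := tmul_rel₂ (x⁻¹ * g * x) (x⁻¹ * h * x) (x⁻¹ * h' * x)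
        convert this using 2 <;> group)

@[simp] theorem tensorAct_tmul (x g h : G) :
    tensorAct x (tmul g h) = tmul (x⁻¹ * g * x) (x⁻¹ * h * x) :=
  PresentedGroup.toGroup.of _

/-- An automorphism `α` of `G` is tensor commuting if `g ⊗ α g = 1` for all `g`. -/
def IsTensorCommuting (α : G ≃* G) : Prop := ∀ g : G, tmul g (α g) = 1

/-- An automorphism `α` of `G` is tensor central if `[x, α] = x⁻¹ * α x` lies in the
tensor center of `G`, i.e. `(x⁻¹ * α x) ⊗ y = 1` for all `x y`. -/
def IsTensorCentral (α : G ≃* G) : Prop := ∀ x y : G, tmul (x⁻¹ * α x) y = 1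

/-- The inner automorphism `T_g : x ↦ x ^ g = g⁻¹ * x * g` of `G` induced by `g`. -/
def innerAut (g : G) : G ≃* G := MulAut.conj g⁻¹

/-- The commutator map `G ⊗ G →* G`, sending `g ⊗ h` to `⁅g, h⁆`. -/
def tensorKappa (G : Type*) [Group G] : TensorSquare G →* G :=
  PresentedGroup.toGroup (f := fun p : G × G => p.1⁻¹ * p.2⁻¹ * p.1 * p.2)
    (by
      rintro r (⟨g, g', h, rfl⟩ | ⟨g, h, h', rfl⟩) <;>
        simp only [map_mul, map_inv, FreeGroup.lift_apply_of] <;> group)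

@[simp] theorem tensorKappa_tmul (g h : G) :
    tensorKappa G (tmul g h) = g⁻¹ * h⁻¹ * g * h :=
  PresentedGroup.toGroup.of _

theorem commute_of_isTensorCommuting (α : G ≃* G) (hα : IsTensorCommuting α) (g : G) :
    Commute g (α g) := by
  have h := congrArg (tensorKappa G) (hα g)
  rw [tensorKappa_tmul, map_one] at h
  have h2 : α g * g * (g⁻¹ * (α g)⁻¹ * g * α g) = α g * g * 1 := by rw [h]
  have h3 : g * α g = α g * g := by
    rw [mul_one] at h2
    calc g * α g = α g * g * (g⁻¹ * (α g)⁻¹ * g * α g) := by group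
      _ = α g * g := h2
  exact h3

theorem tmul_key (α : G ≃* G) (hα : IsTensorCommuting α) (x y : G) :
    tmul (y⁻¹ * x * y) (α y) * tmul y (α (y⁻¹ * x * y)) = 1 := by
  have hc : (α y)⁻¹ * y * α y = y := by
    rw [mul_assoc, (commute_of_isTensorCommuting α hα y).eq, ← mul_assoc,
      inv_mul_cancel, one_mul]
  have hc' : y⁻¹ * α y * y = α y := by
    rw [mul_assoc, ← (commute_of_isTensorCommuting α hα y).eq, ← mul_assoc,
      inv_mul_cancel, one_mul]
  have h1 : tmul (x * y) (α x * α y) = 1 := by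
    have := hα (x * y); rwa [map_mul] at this
  rw [tmul_rel₂ (x * y) (α x) (α y), tmul_rel₁ x y (α y), hc', hα y, mul_one] at h1
  have e : (α y)⁻¹ * (x * y) * α y = ((α y)⁻¹ * x * α y) * y := by
    calc (α y)⁻¹ * (x * y) * α y = (α y)⁻¹ * x * (y * α y) := by group
      _ = (α y)⁻¹ * x * (α y * y) := by
          rw [(commute_of_isTensorCommuting α hα y).eq]
      _ = ((α y)⁻¹ * x * α y) * y := by group
  rw [e, tmul_rel₁ ((α y)⁻¹ * x * α y) y ((α y)⁻¹ * α x * α y)] at h1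
  have e2 : tmul (y⁻¹ * ((α y)⁻¹ * x * α y) * y) (y⁻¹ * ((α y)⁻¹ * α x * α y) * y) = 1 := by
    have h3 := congrArg (tensorAct (α y * y)) (hα x)
    rw [tensorAct_tmul, map_one] at h3
    rw [show y⁻¹ * ((α y)⁻¹ * x * α y) * y = (α y * y)⁻¹ * x * (α y * y) by group,
      show y⁻¹ * ((α y)⁻¹ * α x * α y) * y = (α y * y)⁻¹ * α x * (α y * y) by group]
    exact h3
  rw [e2, one_mul] at h1
  have e3 : α (y⁻¹ * x * y) = (α y)⁻¹ * α x * α y := by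
    rw [map_mul, map_mul, map_inv]
  rw [e3]
  exact h1

/-- If `α` is a tensor commuting automorphism of `G`, then
`x ⊗ α y = (y ⊗ α x)⁻¹` for all `x y ∈ G`. -/
theorem stmt_0 (G : Type*) [Group G] (α : G ≃* G) (hα : IsTensorCommuting α)
    (x y : G) : tmul x (α y) = (tmul y (α x))⁻¹ := by
  have h := tmul_key α hα (y * x * y⁻¹) y
  rw [show y⁻¹ * (y * x * y⁻¹) * y = x by group] at h
  exact eq_inv_of_mul_eq_one_left h
end

section
/- Let G be a group and let α be a tensor commuting automorphism of G. Then for all x, y ∈ G, one has α(x) ⊗ y = (α(y) ⊗ x)⁻¹ in the non-abelian tensor square G ⊗ G. -/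
/-!
Non-abelian tensor square `G ⊗ G`, constructed as the presented group on
symbols `g ⊗ h` with the defining relations
`g*g' ⊗ h = (g^{g'} ⊗ h^{g'}) * (g' ⊗ h)` and
`g ⊗ h*h' = (g ⊗ h') * (g^{h'} ⊗ h^{h'})`, where `a ^ b = b⁻¹ * a * b`.
-/

variable {G : Type*} [Group G]

/-- The commutator map `G ⊗ G →* G`, `g ⊗ h ↦ ⁅g, h⁆`. -/
def tensorLambda : TensorSquare G →* G :=
  PresentedGroup.toGroup
    (f := fun p : G × G => p.1⁻¹ * p.2⁻¹ * p.1 * p.2)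
    (by
      rintro r (⟨g, g', h, rfl⟩ | ⟨g, h, h', rfl⟩) <;>
        simp only [map_mul, map_inv, FreeGroup.lift_apply_of, mul_inv_eq_one] <;> group)

@[simp] theorem tensorLambda_tmul (g h : G) :
    tensorLambda (tmul g h) = g⁻¹ * h⁻¹ * g * h :=
  PresentedGroup.toGroup.of _

/-- The swap anti-isomorphism of `G ⊗ G`: `g ⊗ h ↦ (h ⊗ g)⁻¹`. -/
def tensorSwap : TensorSquare G →* TensorSquare G :=
  PresentedGroup.toGroup
    (f := fun p : G × G => (tmul p.2 p.1)⁻¹)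
    (by
      rintro r (⟨g, g', h, rfl⟩ | ⟨g, h, h', rfl⟩) <;>
        simp only [map_mul, map_inv, FreeGroup.lift_apply_of, mul_inv_eq_one, mul_inv_rev, inv_inv]
      · rw [tmul_rel₂ h g g']; group
      · rw [tmul_rel₁ h h' g]; group)

@[simp] theorem tensorSwap_tmul (g h : G) :
    tensorSwap (tmul g h) = (tmul h g)⁻¹ :=
  PresentedGroup.toGroup.of _

theorem comm_of_isTensorCommuting {α : G ≃* G} (hα : IsTensorCommuting α) (g : G) :
    g * α g = α g * g := by
  have h1 := congrArg tensorLambda (hα g)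
  rw [tensorLambda_tmul, map_one] at h1
  calc g * α g = (α g * g) * (g⁻¹ * (α g)⁻¹ * g * α g) := by group
    _ = α g * g := by rw [h1, mul_one]

/-- Key identity: `x ⊗ α y = (y ⊗ α x)⁻¹`. -/
theorem key_identity {α : G ≃* G} (hα : IsTensorCommuting α) (x y : G) :
    tmul x (α y) = (tmul y (α x))⁻¹ := by
  have hc := comm_of_isTensorCommuting hα
  have main : ∀ z : G, tmul (y⁻¹ * z * y) (α y) * tmul y (α (y⁻¹ * z * y)) = 1 := by
    intro z
    have h1 : tmul (z * y) (α z * α y) = 1 := by rw [← map_mul]; exact hα (z * y)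
    rw [tmul_rel₂ (z * y) (α z) (α y), tmul_rel₁ z y (α y)] at h1
    have e1 : y⁻¹ * α y * y = α y := by
      rw [mul_assoc, ← hc y]; group
    rw [e1, hα y, mul_one] at h1
    have e2 : (α y)⁻¹ * (z * y) * α y = ((α y)⁻¹ * z * α y) * y := by
      calc (α y)⁻¹ * (z * y) * α y = (α y)⁻¹ * z * (y * α y) := by group
        _ = (α y)⁻¹ * z * (α y * y) := by rw [hc y]
        _ = ((α y)⁻¹ * z * α y) * y := by group
    rw [e2, tmul_rel₁ ((α y)⁻¹ * z * α y) y ((α y)⁻¹ * α z * α y)] at h1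
    have e3 : tmul (y⁻¹ * ((α y)⁻¹ * z * α y) * y) (y⁻¹ * ((α y)⁻¹ * α z * α y) * y) = 1 := by
      have e : tmul (y⁻¹ * ((α y)⁻¹ * z * α y) * y) (y⁻¹ * ((α y)⁻¹ * α z * α y) * y)
          = tensorAct (α y * y) (tmul z (α z)) := by
        rw [tensorAct_tmul]; congr 1 <;> group
      rw [e, hα z, map_one]
    rw [e3, one_mul] at h1
    simp only [map_mul, map_inv]
    exact h1
  have h2 := main (y * x * y⁻¹)
  have e : y⁻¹ * (y * x * y⁻¹) * y = x := by group
  rw [e] at h2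
  exact eq_inv_of_mul_eq_one_left h2

/-- If `α` is a tensor commuting automorphism of `G`, then
`α x ⊗ y = (α y ⊗ x)⁻¹` for all `x y ∈ G`. -/
theorem stmt_1 (G : Type*) [Group G] (α : G ≃* G) (hα : IsTensorCommuting α)
    (x y : G) : tmul (α x) y = (tmul (α y) x)⁻¹ := by
  have h := congrArg tensorSwap (key_identity hα x y)
  rw [tensorSwap_tmul, map_inv, tensorSwap_tmul, inv_inv] at h
  exact h.symm
end

section
/- Let G be a group. If α is a tensor commuting automorphism of G, then the inverse automorphism α⁻¹ is also a tensor commuting automorphism of G; that is, A^⊗(G) is closed under inverses. -/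
/-!
Non-abelian tensor square `G ⊗ G`, constructed as the presented group on
symbols `g ⊗ h` with the defining relations
`g*g' ⊗ h = (g^{g'} ⊗ h^{g'}) * (g' ⊗ h)` and
`g ⊗ h*h' = (g ⊗ h') * (g^{h'} ⊗ h^{h'})`, where `a ^ b = b⁻¹ * a * b`.
-/

variable {G : Type*} [Group G]

/-- The flip homomorphism `σ : G ⊗ G → G ⊗ G`, `g ⊗ h ↦ (h ⊗ g)⁻¹`. -/
def tensorFlip : TensorSquare G →* TensorSquare G :=
  PresentedGroup.toGroup
    (f := fun p : G × G => (tmul p.2 p.1)⁻¹)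
    (by
      rintro r (⟨g, g', h, rfl⟩ | ⟨g, h, h', rfl⟩) <;>
        simp only [map_mul, map_inv, FreeGroup.lift_apply_of, mul_inv_rev, inv_inv,
          inv_mul_eq_one, mul_inv_eq_one]
      · exact tmul_rel₂ h g g'
      · exact tmul_rel₁ h h' g)

@[simp] theorem tensorFlip_tmul (g h : G) :
    tensorFlip (tmul g h) = (tmul h g)⁻¹ :=
  PresentedGroup.toGroup.of _

/-- If `α` is a tensor commuting automorphism of `G`, so is `α⁻¹`. -/
theorem stmt_4 (G : Type*) [Group G] (α : G ≃* G) (hα : IsTensorCommuting α) :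
    IsTensorCommuting α⁻¹ := by
  intro g
  have h1 := hα (α⁻¹ g)
  rw [show α ((α⁻¹ : G ≃* G) g) = g from α.apply_symm_apply g] at h1
  have h2 := congrArg tensorFlip h1
  rw [tensorFlip_tmul, map_one, inv_eq_one] at h2
  exact h2
end

section
/- Let G be a group, let α be a tensor commuting automorphism of G, and let x ∈ G. Then the element [x, α] = x⁻¹α(x) of G acts trivially on the non-abelian tensor square G ⊗ G; that is, (z ⊗ w)^{[x,α]} = z ⊗ w for all z, w ∈ G. -/
/-!
Non-abelian tensor square `G ⊗ G`, constructed as the presented group on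
symbols `g ⊗ h` with the defining relations
`g*g' ⊗ h = (g^{g'} ⊗ h^{g'}) * (g' ⊗ h)` and
`g ⊗ h*h' = (g ⊗ h') * (g^{h'} ⊗ h^{h'})`, where `a ^ b = b⁻¹ * a * b`.
-/

variable {G : Type*} [Group G]

section Aux

variable {G : Type*} [Group G]

theorem tensorAct_tensorAct (a b : G) (t : TensorSquare G) :
    tensorAct b (tensorAct a t) = tensorAct (a * b) t := by
  have h : (tensorAct b).comp (tensorAct a) = tensorAct (a * b) := by
    apply PresentedGroup.ext
    rintro ⟨g, h⟩
    show tensorAct b (tensorAct a (tmul g h)) = tensorAct (a * b) (tmul g h)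
    simp only [tensorAct_tmul]
    congr 1 <;> group
  exact DFunLike.congr_fun h t

theorem tensorAct_one (t : TensorSquare G) : tensorAct (1 : G) t = t := by
  have h : tensorAct (1 : G) = MonoidHom.id (TensorSquare G) := by
    apply PresentedGroup.ext
    rintro ⟨g, h⟩
    show tensorAct (1 : G) (tmul g h) = tmul g h
    simp
  rw [h]; rfl

theorem pairV (α : G ≃* G) (hα : IsTensorCommuting α) (u v : G) :
    tensorAct v (tmul u (α v)) * tensorAct (α v) (tmul v (α u)) = 1 := by
  have h := hα (u * v)
  rw [map_mul] at h
  rw [tmul_rel₂ (u * v) (α u) (α v), ← tensorAct_tmul (α v) (u * v) (α u)] at h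
  rw [tmul_rel₁ u v (α v), ← tensorAct_tmul v u (α v), hα v, mul_one] at h
  rw [tmul_rel₁ u v (α u), ← tensorAct_tmul v u (α u), hα u, map_one, one_mul] at h
  exact h

theorem tripleT1 (α : G ≃* G) (hα : IsTensorCommuting α) (u v w : G) :
    tensorAct (v * w) (tmul u (α w)) * tensorAct (α v * α w) (tmul w (α u)) = 1 := by
  have h := pairV α hα (u * v) w
  rw [map_mul] at h
  rw [tmul_rel₁ u v (α w), ← tensorAct_tmul v u (α w)] at h
  rw [tmul_rel₂ w (α u) (α v), ← tensorAct_tmul (α v) w (α u)] at h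
  rw [map_mul, map_mul, tensorAct_tensorAct, tensorAct_tensorAct] at h
  have h2 := pairV α hα v w
  rw [mul_assoc, ← mul_assoc (tensorAct w (tmul v (α w))), h2, one_mul] at h
  exact h

theorem act_eq_act_map (α : G ≃* G) (hα : IsTensorCommuting α) (u w x : G) :
    tensorAct x (tmul u (α w)) = tensorAct (α x) (tmul u (α w)) := by
  set X := tmul u (α w) with hX
  -- from pairV: Y = (X^{w * (α w)⁻¹})⁻¹
  have h1 := pairV α hα u w
  have eqY : tmul w (α u) = (tensorAct (w * (α w)⁻¹) X)⁻¹ := by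
    have e : tensorAct (α w) (tmul w (α u)) = (tensorAct w X)⁻¹ :=
      eq_inv_of_mul_eq_one_right (by exact h1)
    have e2 := congrArg (tensorAct (α w)⁻¹) e
    rw [tensorAct_tensorAct, map_inv, tensorAct_tensorAct] at e2
    have e3 : α w * (α w)⁻¹ = 1 := by group
    rw [e3, tensorAct_one] at e2
    exact e2
  -- IXraw : X^{v*w} = X^{w (αw)⁻¹ αv αw}  for all v
  have ixraw : ∀ v : G, tensorAct (v * w) X
      = tensorAct (w * (α w)⁻¹ * (α v * α w)) X := by
    intro v
    have h3 := tripleT1 α hα u v w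
    rw [eqY, map_inv, tensorAct_tensorAct] at h3
    rw [mul_inv_eq_one] at h3
    exact h3
  -- VII : X^{w (αw)⁻¹} = X
  have vii : tensorAct (w * (α w)⁻¹) X = X := by
    have h4 := ixraw w⁻¹
    have e1 : w⁻¹ * w = (1 : G) := by group
    have e2 : w * (α w)⁻¹ * (α w⁻¹ * α w) = w * (α w)⁻¹ := by
      rw [map_inv]; group
    rw [e1, tensorAct_one, e2] at h4
    exact h4.symm
  -- IX : X^{v*w} = X^{αv * αw}
  have ix : ∀ v : G, tensorAct (v * w) X = tensorAct (α v * α w) X := by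
    intro v
    rw [ixraw v, ← tensorAct_tensorAct, vii]
  have h5 := ix (x * w⁻¹)
  have e1 : x * w⁻¹ * w = x := by group
  have e2 : α (x * w⁻¹) * α w = α x := by rw [map_mul, map_inv]; group
  rw [e1, e2] at h5
  exact h5

end Aux

/-- If `α` is a tensor commuting automorphism of `G` and `x ∈ G`, then
`[x, α] = x⁻¹ * α x` acts trivially on `G ⊗ G`. -/
theorem stmt_7 (G : Type*) [Group G] (α : G ≃* G) (hα : IsTensorCommuting α)
    (x z w : G) : tensorAct (x⁻¹ * α x) (tmul z w) = tmul z w := by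
  obtain ⟨w', rfl⟩ : ∃ w', α w' = w := ⟨α.symm w, α.apply_symm_apply w⟩
  have k := act_eq_act_map α hα z w' x⁻¹
  rw [map_inv] at k
  calc tensorAct (x⁻¹ * α x) (tmul z (α w'))
      = tensorAct (α x) (tensorAct x⁻¹ (tmul z (α w'))) :=
        (tensorAct_tensorAct _ _ _).symm
    _ = tensorAct (α x) (tensorAct (α x)⁻¹ (tmul z (α w'))) := by rw [k]
    _ = tensorAct ((α x)⁻¹ * α x) (tmul z (α w')) := tensorAct_tensorAct _ _ _
    _ = tmul z (α w') := by rw [inv_mul_cancel, tensorAct_one]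
end

section
/- Let G be a group such that x ⊗ x = 1_⊗ for all x ∈ G, let g ∈ G, and let T_g be the inner automorphism of G induced by g (so T_g(x) = x^g = g⁻¹xg). Then T_g is a tensor commuting automorphism of G if and only if g ∈ R_2^⊗(G). -/
/-!
Non-abelian tensor square `G ⊗ G`, constructed as the presented group on
symbols `g ⊗ h` with the defining relations
`g*g' ⊗ h = (g^{g'} ⊗ h^{g'}) * (g' ⊗ h)` and
`g ⊗ h*h' = (g ⊗ h') * (g^{h'} ⊗ h^{h'})`, where `a ^ b = b⁻¹ * a * b`.
-/

variable {G : Type*} [Group G]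

section Aux

private theorem aux_tmul_one (a : G) : tmul a (1 : G) = 1 := by
  have h := tmul_rel₂ a 1 1
  simp only [mul_one, one_mul, inv_one] at h
  exact left_eq_mul.mp h

private theorem aux_one_tmul (h : G) : tmul (1 : G) h = 1 := by
  have h3 := tmul_rel₁ 1 1 h
  simp only [mul_one, one_mul, inv_one] at h3
  exact left_eq_mul.mp h3

private theorem aux_antisym (hsq : ∀ x : G, tmul x x = 1) (a y : G) :
    tmul a y * tmul y a = 1 := by
  have h1 := hsq (y * a)
  have h2 := tmul_rel₂ (y * a) (y * a * y⁻¹) y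
  have h3 := tmul_rel₁ (y * a * y⁻¹) y y
  have h4 := tmul_rel₁ a y a
  simp only [mul_assoc, inv_mul_cancel_left, mul_inv_cancel_left, mul_inv_cancel,
    inv_mul_cancel, mul_one, one_mul, inv_one, inv_inv] at h1 h2 h3 h4
  rw [h3, hsq y, mul_one] at h2
  rw [hsq, one_mul] at h4
  rw [h2, h4] at h1
  exact h1

private theorem aux_inv_left (b h : G) : tmul b⁻¹ h = (tmul b (b * (h * b⁻¹)))⁻¹ := by
  have h1 := tmul_rel₁ b b⁻¹ h
  simp only [mul_assoc, inv_mul_cancel_left, mul_inv_cancel_left, mul_inv_cancel,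
    inv_mul_cancel, mul_one, one_mul, inv_one, inv_inv] at h1
  rw [aux_one_tmul, eq_comm, mul_eq_one_iff_inv_eq, eq_comm] at h1
  exact h1

private theorem aux_key (hsq : ∀ x : G, tmul x x = 1) (c x : G) :
    tmul x c = 1 ↔ tmul c⁻¹ x = 1 := by
  have hcx : tmul c (c * (x * c⁻¹)) = 1 ↔ tmul c x = 1 := by
    constructor
    · intro h
      have h5 := tensorAct_tmul c c (c * (x * c⁻¹))
      simp only [mul_assoc, inv_mul_cancel_left, mul_inv_cancel_left, mul_inv_cancel,
        inv_mul_cancel, mul_one, one_mul, inv_one, inv_inv] at h5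
      rw [← h5, h, map_one]
    · intro h
      have h5 := tensorAct_tmul c⁻¹ c x
      simp only [mul_assoc, inv_mul_cancel_left, mul_inv_cancel_left, mul_inv_cancel,
        inv_mul_cancel, mul_one, one_mul, inv_one, inv_inv] at h5
      rw [← h5, h, map_one]
  have hanti : tmul x c = 1 ↔ tmul c x = 1 := by
    have h := aux_antisym hsq x c
    constructor
    · intro hx; rwa [hx, one_mul] at h
    · intro hx; rwa [hx, mul_one] at h
  rw [hanti, aux_inv_left, inv_eq_one, hcx]

end Aux

/-- If `x ⊗ x = 1` for all `x ∈ G`, then the inner automorphism `T_g` is tensor commuting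
iff `g` is a right `2⊗`-Engel element, i.e. `[g, x] ⊗ x = 1` for all `x`. -/
theorem stmt_8 (G : Type*) [Group G] (hsq : ∀ x : G, tmul x x = 1) (g : G) :
    IsTensorCommuting (innerAut g) ↔ ∀ x : G, tmul (g⁻¹ * x⁻¹ * g * x) x = 1 := by
  have step : ∀ x : G, tmul x (innerAut g x) = 1 ↔ tmul (g⁻¹ * x⁻¹ * g * x) x = 1 := by
    intro x
    have h1 : innerAut g x = x * (x⁻¹ * g⁻¹ * x * g) := by
      simp [innerAut, MulAut.conj_apply, mul_assoc]
    have h2 : tmul x (x * (x⁻¹ * g⁻¹ * x * g)) = tmul x (x⁻¹ * g⁻¹ * x * g) := by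
      have := tmul_rel₂ x x (x⁻¹ * g⁻¹ * x * g)
      rw [this, hsq, mul_one]
    have h3 : (x⁻¹ * g⁻¹ * x * g)⁻¹ = g⁻¹ * x⁻¹ * g * x := by group
    rw [h1, h2, aux_key hsq, h3]
  exact forall_congr' step
end

section
/- Let G be a group such that x ⊗ x = 1_⊗ for all x ∈ G. If the identity automorphism is the only tensor commuting automorphism of G, then R_2^⊗(G) = Z(G). -/
/-!
Non-abelian tensor square `G ⊗ G`, constructed as the presented group on
symbols `g ⊗ h` with the defining relations
`g*g' ⊗ h = (g^{g'} ⊗ h^{g'}) * (g' ⊗ h)` and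
`g ⊗ h*h' = (g ⊗ h') * (g^{h'} ⊗ h^{h'})`, where `a ^ b = b⁻¹ * a * b`.
-/

variable {G : Type*} [Group G]

theorem tmul_one_right' (g : G) : tmul g (1 : G) = 1 := by
  have h := tmul_rel₂ g 1 1
  simp only [mul_one, one_mul, inv_one] at h
  exact (left_eq_mul.mp h)

theorem tmul_one_left' (k : G) : tmul (1 : G) k = 1 := by
  have h := tmul_rel₁ 1 1 k
  simp only [mul_one, one_mul, inv_one] at h
  exact (left_eq_mul.mp h)

theorem tmul_antisymm' (hsq : ∀ x : G, tmul x x = 1) (a b : G) :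
    tmul a b * tmul b a = 1 := by
  have h1 := tmul_rel₁ (b * a * b⁻¹) b (b * a)
  rw [show b * a * b⁻¹ * b = b * a by group,
      show b⁻¹ * (b * a * b⁻¹) * b = a by group,
      show b⁻¹ * (b * a) * b = a * b by group, hsq] at h1
  have h2 := tmul_rel₂ a a b
  rw [hsq, mul_one] at h2
  have h3 := tmul_rel₂ b b a
  rw [hsq, mul_one] at h3
  rw [h2, h3] at h1
  exact h1.symm

theorem tmul_inv_left' (a k : G) : tmul a⁻¹ k = (tmul a (a * k * a⁻¹))⁻¹ := by
  have h1 := tmul_rel₁ a a⁻¹ k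
  rw [mul_inv_cancel, show a⁻¹⁻¹ * a * a⁻¹ = a by group,
      show a⁻¹⁻¹ * k * a⁻¹ = a * k * a⁻¹ by group, tmul_one_left'] at h1
  rw [eq_comm, inv_eq_iff_mul_eq_one, ← h1]

/-- If `x ⊗ x = 1` for all `x ∈ G` and the identity is the only tensor commuting
automorphism of `G`, then `R₂⊗(G) = Z(G)`. -/
theorem stmt_10 (G : Type*) [Group G] (hsq : ∀ x : G, tmul x x = 1)
    (h : ∀ α : G ≃* G, IsTensorCommuting α → α = 1) :
    {g : G | ∀ x : G, tmul (g⁻¹ * x⁻¹ * g * x) x = 1} = (Subgroup.center G : Set G) := by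
  ext g
  simp only [Set.mem_setOf_eq, SetLike.mem_coe]
  constructor
  · intro hg
    have hc : IsTensorCommuting (innerAut g) := by
      intro x
      set d := g⁻¹ * x⁻¹ * g * x with hd
      have hdx : tmul d x = 1 := hg x
      have h1 : tmul d (d * x * d⁻¹) = 1 := by
        have := congrArg (tensorAct d⁻¹) hdx
        rw [tensorAct_tmul, map_one, show d⁻¹⁻¹ * d * d⁻¹ = d by group,
            show d⁻¹⁻¹ * x * d⁻¹ = d * x * d⁻¹ by group] at this
        exact this
      have h2 : tmul d⁻¹ x = 1 := by rw [tmul_inv_left', h1, inv_one]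
      have h3 : tmul x d⁻¹ = 1 := by
        have := tmul_antisymm' hsq x d⁻¹
        rwa [h2, mul_one] at this
      have h4 := tmul_rel₂ x x d⁻¹
      rw [h3, one_mul, hsq] at h4
      show tmul x (innerAut g x) = 1
      have : innerAut g x = x * d⁻¹ := by
        simp only [innerAut, MulAut.conj_apply, hd]
        group
      rw [this, h4]
    have hα := h (innerAut g) hc
    rw [Subgroup.mem_center_iff]
    intro x
    have this : g⁻¹ * x * g = x := by
      have h' := MulEquiv.ext_iff.mp hα x
      simpa [innerAut, MulAut.conj_apply] using h'
    calc x * g = g * (g⁻¹ * x * g) := by group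
      _ = g * x := by rw [this]
  · intro hg x
    have hc : g⁻¹ * x⁻¹ * g * x = 1 := by
      have := (Subgroup.mem_center_iff.mp hg x⁻¹)
      rw [show g⁻¹ * x⁻¹ * g * x = g⁻¹ * (x⁻¹ * g) * x by group, this]
      group
    rw [hc]
    exact tmul_one_left' x
end

section
/- Let G be a group and let α be a tensor central automorphism of G. Then α(x) ⊗ α(y) = x ⊗ y for all x, y ∈ G; that is, the induced endomorphism α ⊗ α of G ⊗ G is the identity. -/
/-!
Non-abelian tensor square `G ⊗ G`, constructed as the presented group on
symbols `g ⊗ h` with the defining relations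
`g*g' ⊗ h = (g^{g'} ⊗ h^{g'}) * (g' ⊗ h)` and
`g ⊗ h*h' = (g ⊗ h') * (g^{h'} ⊗ h^{h'})`, where `a ^ b = b⁻¹ * a * b`.
-/

variable {G : Type*} [Group G]

/-- The swap-inverse endomorphism of `G ⊗ G`, sending `g ⊗ h` to `(h ⊗ g)⁻¹`. -/
def swapInv : TensorSquare G →* TensorSquare G :=
  PresentedGroup.toGroup
    (f := fun p : G × G => (tmul p.2 p.1)⁻¹)
    (by
      rintro r (⟨g, g', h, rfl⟩ | ⟨g, h, h', rfl⟩) <;>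
        simp only [map_mul, map_inv, FreeGroup.lift_apply_of, mul_inv_rev, inv_inv]
      · rw [← tmul_rel₂]; exact mul_inv_cancel _
      · rw [← tmul_rel₁]; exact inv_mul_cancel _)

@[simp] theorem swapInv_tmul (g h : G) : swapInv (tmul g h) = (tmul h g)⁻¹ :=
  PresentedGroup.toGroup.of _

/-- If `a` annihilates in the left slot, it annihilates in the right slot too. -/
theorem tmul_right_eq_one {a : G} (ha : ∀ z : G, tmul a z = 1) (z : G) :
    tmul z a = 1 := by
  have := congrArg swapInv (ha z)
  rwa [swapInv_tmul, map_one, inv_eq_one] at this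

/-- Left-slot absorption: a left-annihilating element can be stripped. -/
theorem tmul_mulL {a : G} (ha : ∀ z : G, tmul a z = 1) (g h : G) :
    tmul (a * g) h = tmul g h := by
  have h1 := tmul_rel₁ a g h
  have h2 : tmul (g⁻¹ * a * g) (g⁻¹ * h * g) = 1 := by
    rw [← tensorAct_tmul g a h, ha, map_one]
  rw [h1, h2, one_mul]

/-- Right-slot absorption: a left-annihilating element can be stripped. -/
theorem tmul_mulR {b : G} (hb : ∀ z : G, tmul b z = 1) (g h : G) :
    tmul g (b * h) = tmul g h := by
  have h1 := tmul_rel₂ g b h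
  have h2 : tmul (h⁻¹ * g * h) (h⁻¹ * b * h) = 1 := by
    rw [← tensorAct_tmul h g b, tmul_right_eq_one hb, map_one]
  rw [h1, h2, mul_one]

/-- Conjugates of left-annihilating elements are left-annihilating. -/
theorem tmul_conj {a : G} (ha : ∀ z : G, tmul a z = 1) (y z : G) :
    tmul (y * a * y⁻¹) z = 1 := by
  have := tensorAct_tmul y⁻¹ a (y⁻¹ * z * y)
  simp only [inv_inv] at this
  rw [show y * (y⁻¹ * z * y) * y⁻¹ = z by group] at this
  rw [← this, ha, map_one]

/-- If `α` is a tensor central automorphism of `G`, then `α x ⊗ α y = x ⊗ y` for all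
`x y ∈ G`; that is, `α ⊗ α` is the identity on `G ⊗ G`. -/
theorem stmt_14 (G : Type*) [Group G] (α : G ≃* G) (hα : IsTensorCentral α)
    (x y : G) : tmul (α x) (α y) = tmul x y := by
  have ha : ∀ z : G, tmul (α x * x⁻¹) z = 1 := by
    intro z
    have := tmul_conj (a := x⁻¹ * α x) (hα x) x z
    rwa [show x * (x⁻¹ * α x) * x⁻¹ = α x * x⁻¹ by group] at this
  have hb : ∀ z : G, tmul (α y * y⁻¹) z = 1 := by
    intro z
    have := tmul_conj (a := y⁻¹ * α y) (hα y) y z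
    rwa [show y * (y⁻¹ * α y) * y⁻¹ = α y * y⁻¹ by group] at this
  calc tmul (α x) (α y) = tmul ((α x * x⁻¹) * x) ((α y * y⁻¹) * y) := by
        rw [show (α x * x⁻¹) * x = α x by group, show (α y * y⁻¹) * y = α y by group]
    _ = tmul x ((α y * y⁻¹) * y) := tmul_mulL ha _ _
    _ = tmul x y := tmul_mulR hb _ _
end

section
/- Let G be a group and let α be a tensor commuting automorphism of G. Then α² is a tensor central automorphism of G if and only if α(x) ⊗ α(y) = (y ⊗ x)⁻¹ for all x, y ∈ G. -/
/-!
Non-abelian tensor square `G ⊗ G`, constructed as the presented group on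
symbols `g ⊗ h` with the defining relations
`g*g' ⊗ h = (g^{g'} ⊗ h^{g'}) * (g' ⊗ h)` and
`g ⊗ h*h' = (g ⊗ h') * (g^{h'} ⊗ h^{h'})`, where `a ^ b = b⁻¹ * a * b`.
-/

variable {G : Type*} [Group G]

/-! ### Auxiliary infrastructure for the proof -/

theorem ts_hom_ext {H : Type*} [Group H] {f g : TensorSquare G →* H}
    (h : ∀ a b : G, f (tmul a b) = g (tmul a b)) : f = g :=
  PresentedGroup.ext (fun x => h x.1 x.2)

theorem one_tmul (h : G) : tmul 1 h = 1 := by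
  have := tmul_rel₁ (1 : G) 1 h
  simp only [one_mul, mul_one, inv_one] at this
  exact left_eq_mul.mp this

theorem tmul_one (g : G) : tmul g 1 = 1 := by
  have := tmul_rel₂ g 1 1
  simp only [one_mul, mul_one, inv_one] at this
  exact right_eq_mul.mp this

theorem act_act (z w : G) (c : TensorSquare G) :
    tensorAct w (tensorAct z c) = tensorAct (z * w) c := by
  have : (tensorAct w).comp (tensorAct z) = tensorAct (z * w : G) := by
    apply ts_hom_ext
    intro a b
    simp only [MonoidHom.comp_apply, tensorAct_tmul, mul_inv_rev]
    congr 1 <;> group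
  exact DFunLike.congr_fun this c

theorem act_one (c : TensorSquare G) : tensorAct (1 : G) c = c := by
  have : tensorAct (1 : G) = MonoidHom.id (TensorSquare G) := by
    apply ts_hom_ext
    intro a b
    simp
  rw [this]; rfl

theorem act_cancel (z : G) (c : TensorSquare G) :
    tensorAct z⁻¹ (tensorAct z c) = c := by
  rw [act_act, mul_inv_cancel, act_one]

theorem inv_tmul (x y : G) : tmul x⁻¹ y = (tmul x (x * y * x⁻¹))⁻¹ := by
  have := tmul_rel₁ x x⁻¹ y
  simp only [mul_inv_cancel, inv_inv] at this
  rw [one_tmul] at this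
  have hx : x * x * x⁻¹ = x := by group
  rw [hx] at this
  exact eq_inv_of_mul_eq_one_right this.symm

/-- the commutator map κ : G ⊗ G → G -/
def kappa : TensorSquare G →* G :=
  PresentedGroup.toGroup
    (f := fun p : G × G => p.1⁻¹ * p.2⁻¹ * p.1 * p.2)
    (by
      rintro r (⟨g, g', h, rfl⟩ | ⟨g, h, h', rfl⟩) <;>
        simp only [map_mul, map_inv, FreeGroup.lift_apply_of, mul_inv_eq_one] <;> group)

@[simp] theorem kappa_tmul (g h : G) : kappa (tmul g h) = g⁻¹ * h⁻¹ * g * h :=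
  PresentedGroup.toGroup.of _

theorem comm_of_tmul_eq_one {a b : G} (h : tmul a b = 1) : a * b = b * a := by
  have := congrArg kappa h
  simp only [kappa_tmul, map_one] at this
  have : a⁻¹ * b⁻¹ * a * b = 1 := this
  calc a * b = b * a * (a⁻¹ * b⁻¹ * a * b) := by group
    _ = b * a := by rw [this, mul_one]

/-- the swap antihomomorphism σ : g ⊗ h ↦ (h ⊗ g)⁻¹ -/
def sigmaHom : TensorSquare G →* TensorSquare G :=
  PresentedGroup.toGroup
    (f := fun p : G × G => (tmul p.2 p.1)⁻¹)
    (by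
      rintro r (⟨g, g', h, rfl⟩ | ⟨g, h, h', rfl⟩) <;>
        simp only [map_mul, map_inv, FreeGroup.lift_apply_of, mul_inv_eq_one, inv_inv, mul_inv_rev]
      · rw [← tmul_rel₂ h g g']; exact inv_mul_cancel _
      · rw [← tmul_rel₁ h h' g]; exact inv_mul_cancel _)

@[simp] theorem sigma_tmul (g h : G) : sigmaHom (tmul g h) = (tmul h g)⁻¹ :=
  PresentedGroup.toGroup.of _

theorem tmul_eq_one_symm {a b : G} (h : tmul a b = 1) : tmul b a = 1 := by
  have := congrArg sigmaHom h
  simp only [sigma_tmul, map_one, inv_eq_one] at this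
  exact this

/-- the homomorphism induced by α : g ⊗ h ↦ αg ⊗ αh -/
def alphaT (α : G ≃* G) : TensorSquare G →* TensorSquare G :=
  PresentedGroup.toGroup
    (f := fun p : G × G => tmul (α p.1) (α p.2))
    (by
      rintro r (⟨g, g', h, rfl⟩ | ⟨g, h, h', rfl⟩) <;>
        simp only [map_mul, map_inv, FreeGroup.lift_apply_of, mul_inv_eq_one]
      · have := tmul_rel₁ (α g) (α g') (α h)
        convert this using 2 <;> simp [map_mul, map_inv]
      · have := tmul_rel₂ (α g) (α h) (α h')
        convert this using 2 <;> simp [map_mul, map_inv])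

@[simp] theorem alphaT_tmul (α : G ≃* G) (g h : G) :
    alphaT α (tmul g h) = tmul (α g) (α h) :=
  PresentedGroup.toGroup.of _

theorem pow_two_apply (α : G ≃* G) (x : G) : (α ^ 2) x = α (α x) := by
  rw [pow_two]; rfl

variable {α : G ≃* G}

theorem comm_alpha (hα : IsTensorCommuting α) (x : G) : x * α x = α x * x :=
  comm_of_tmul_eq_one (hα x)

theorem comm_alpha' (hα : IsTensorCommuting α) (x : G) : α x * x⁻¹ = x⁻¹ * α x := by
  calc α x * x⁻¹ = x⁻¹ * (x * α x) * x⁻¹ := by group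
    _ = x⁻¹ * (α x * x) * x⁻¹ := by rw [comm_alpha hα]
    _ = x⁻¹ * α x := by group

/-- The fundamental polarization identity for tensor commuting automorphisms. -/
theorem star_id (hα : IsTensorCommuting α) (x y : G) :
    tensorAct y (tmul x (α y)) * tensorAct (α y) (tmul y (α x)) = 1 := by
  have h0 : tmul (x * y) (α x * α y) = 1 := by rw [← map_mul]; exact hα (x * y)
  rw [tmul_rel₂ (x * y) (α x) (α y), tmul_rel₁ x y (α y), hα y, mul_one] at h0
  have e : (α y)⁻¹ * (x * y) * α y = ((α y)⁻¹ * x * α y) * ((α y)⁻¹ * y * α y) := by group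
  rw [e, tmul_rel₁ ((α y)⁻¹ * x * α y) ((α y)⁻¹ * y * α y) ((α y)⁻¹ * α x * α y)] at h0
  have e2 : ((α y)⁻¹ * y * α y)⁻¹ * ((α y)⁻¹ * x * α y) * ((α y)⁻¹ * y * α y)
      = (y * α y)⁻¹ * x * (y * α y) := by group
  have e3 : ((α y)⁻¹ * y * α y)⁻¹ * ((α y)⁻¹ * α x * α y) * ((α y)⁻¹ * y * α y)
      = (y * α y)⁻¹ * α x * (y * α y) := by group
  rw [e2, e3] at h0
  have h1 : tmul ((y * α y)⁻¹ * x * (y * α y)) ((y * α y)⁻¹ * α x * (y * α y)) = 1 := by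
    rw [← tensorAct_tmul, hα x, map_one]
  rw [h1, one_mul] at h0
  simpa only [tensorAct_tmul] using h0

theorem backward_dir (hα : IsTensorCommuting α)
    (H : ∀ x y : G, tmul (α x) (α y) = (tmul y x)⁻¹) (x y : G) :
    tmul (x⁻¹ * α (α x)) y = 1 := by
  -- the action of z agrees with the action of α z on generators
  have actEq : ∀ z a b : G,
      tensorAct (α z) (tmul a b) = tensorAct z (tmul a b) := by
    have key : ∀ z u v : G,
        tensorAct z (tmul u v) = tensorAct (α.symm z) (tmul u v) := by
      intro z u v
      have h1 : tensorAct z (tmul (α (α.symm u)) (α (α.symm v)))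
          = (tensorAct (α.symm z) (tmul (α.symm v) (α.symm u)))⁻¹ := by
        simp only [tensorAct_tmul]
        have e1 : z⁻¹ * α (α.symm u) * z
            = α ((α.symm z)⁻¹ * α.symm u * α.symm z) := by
          simp [map_mul, map_inv]
        have e2 : z⁻¹ * α (α.symm v) * z
            = α ((α.symm z)⁻¹ * α.symm v * α.symm z) := by
          simp [map_mul, map_inv]
        rw [e1, e2, H]
      rw [α.apply_symm_apply, α.apply_symm_apply] at h1
      have h2 : tmul u v = (tmul (α.symm v) (α.symm u))⁻¹ := by
        have := H (α.symm u) (α.symm v)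
        rw [α.apply_symm_apply, α.apply_symm_apply] at this
        rw [this]
      rw [h2, map_inv] at h1
      rw [h2, map_inv, map_inv]
      exact h1
    intro z a b
    have := key (α z) a b
    rwa [α.symm_apply_apply] at this
  -- key step : (α²x) ⊗ y = x ⊗ y
  have step : ∀ w : G, tmul (α (α x)) w = tmul x w := by
    intro w
    have h2 := H (α x) (α.symm w)
    rw [α.apply_symm_apply] at h2
    have hs := star_id hα (α.symm w) x
    rw [α.apply_symm_apply] at hs
    -- hs : act x (t (α.symm w) (αx)) * act (αx) (t x w) = 1
    have h3 : tensorAct x (tmul (α.symm w) (α x))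
        = (tensorAct (α x) (tmul x w))⁻¹ :=
      eq_inv_of_mul_eq_one_left hs
    have h4 : tmul (α.symm w) (α x)
        = (tensorAct x⁻¹ (tensorAct (α x) (tmul x w)))⁻¹ := by
      rw [← map_inv, ← h3, act_cancel]
    rw [h4, inv_inv] at h2
    rw [h2, actEq x x w, act_cancel]
  rw [tmul_rel₁ x⁻¹ (α (α x)) y, step y]
  have h5 : tmul ((α (α x))⁻¹ * x⁻¹ * α (α x)) ((α (α x))⁻¹ * y * α (α x))
      = tensorAct (α (α x)) (tmul x⁻¹ y) := by simp
  rw [h5, actEq (α x), actEq x, tensorAct_tmul]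
  have e6 : x⁻¹ * x⁻¹ * x = x⁻¹ := by group
  rw [e6, inv_tmul x (x⁻¹ * y * x)]
  have e7 : x * (x⁻¹ * y * x) * x⁻¹ = y := by group
  rw [e7, inv_mul_cancel]

theorem forward_dir (hα : IsTensorCommuting α)
    (hC : ∀ a b : G, tmul (a⁻¹ * α (α a)) b = 1) (x y : G) :
    tmul (α x) (α y) = (tmul y x)⁻¹ := by
  have cZ : ∀ a z : G, (a⁻¹ * α (α a)) * z = z * (a⁻¹ * α (α a)) :=
    fun a z => comm_of_tmul_eq_one (hC a z)
  have actC : ∀ a u v : G, tensorAct (a⁻¹ * α (α a)) (tmul u v) = tmul u v := by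
    intro a u v
    rw [tensorAct_tmul]
    congr 1
    · rw [mul_assoc, ← cZ a u, ← mul_assoc, inv_mul_cancel, one_mul]
    · rw [mul_assoc, ← cZ a v, ← mul_assoc, inv_mul_cancel, one_mul]
  have stripL : ∀ a w : G, tmul (α (α a)) w = tmul a w := by
    intro a w
    have e : α (α a) = a * (a⁻¹ * α (α a)) := by group
    rw [e, tmul_rel₁ a (a⁻¹ * α (α a)) w, hC a w, mul_one, ← tensorAct_tmul, actC]
  have Uform : ∀ u v : G, sigmaHom (alphaT α (tmul u v))
      = tensorAct (u⁻¹ * α u) (tmul u v) := by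
    intro u v
    obtain ⟨w, rfl⟩ : ∃ w, α w = v := ⟨α.symm v, α.apply_symm_apply v⟩
    rw [alphaT_tmul, sigma_tmul, stripL w (α u)]
    have hs := star_id hα w u
    have h3 : tensorAct u (tmul w (α u)) = (tensorAct (α u) (tmul u (α w)))⁻¹ :=
      eq_inv_of_mul_eq_one_left hs
    have h4 : tmul w (α u)
        = (tensorAct u⁻¹ (tensorAct (α u) (tmul u (α w))))⁻¹ := by
      rw [← map_inv, ← h3, act_cancel]
    rw [h4, inv_inv, act_act, comm_alpha' hα u]
  have intertwine : ∀ w a b : G,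
      sigmaHom (alphaT α (tensorAct w (tmul a b)))
        = tensorAct (α w) (sigmaHom (alphaT α (tmul a b))) := by
    intro w a b
    simp only [tensorAct_tmul, alphaT_tmul, sigma_tmul, map_mul, map_inv]
  have KEY : ∀ w a b : G, tensorAct (w * (α w)⁻¹) (tmul a b) = tmul a b := by
    intro w a b
    set z := a⁻¹ * b * a with hz
    have hIT := intertwine w a z
    have lhs1 : sigmaHom (alphaT α (tensorAct w (tmul a z)))
        = tensorAct (w * ((w⁻¹ * a * w)⁻¹ * α (w⁻¹ * a * w))) (tmul a z) := by
      rw [tensorAct_tmul, Uform (w⁻¹ * a * w) (w⁻¹ * z * w), ← tensorAct_tmul w a z,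
        act_act]
    have rhs1 : tensorAct (α w) (sigmaHom (alphaT α (tmul a z)))
        = tensorAct ((a⁻¹ * α a) * α w) (tmul a z) := by
      rw [Uform a z, act_act]
    have e1 : w * ((w⁻¹ * a * w)⁻¹ * α (w⁻¹ * a * w))
        = (a⁻¹ * (w * (α w)⁻¹)) * (α a * α w) := by
      simp only [map_mul, map_inv]; group
    have e2 : (a⁻¹ * α a) * α w = a⁻¹ * (α a * α w) := by group
    have h5 : tensorAct ((a⁻¹ * (w * (α w)⁻¹)) * (α a * α w)) (tmul a z)
        = tensorAct (a⁻¹ * (α a * α w)) (tmul a z) := by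
      rw [← e1, ← e2, ← lhs1, ← rhs1, hIT]
    rw [← act_act (a⁻¹ * (w * (α w)⁻¹)) (α a * α w),
      ← act_act a⁻¹ (α a * α w)] at h5
    have h6 := congrArg (tensorAct (α a * α w)⁻¹) h5
    rw [act_cancel, act_cancel] at h6
    have h7 : tensorAct a⁻¹ (tmul a (a⁻¹ * b * a)) = tmul a b := by
      rw [tensorAct_tmul]; congr 1 <;> group
    rw [← act_act a⁻¹ (w * (α w)⁻¹), hz, h7] at h6
    exact h6
  have hU := Uform y x
  rw [alphaT_tmul, sigma_tmul] at hU
  have h8 : (y * (α y)⁻¹)⁻¹ = y⁻¹ * α y := by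
    rw [mul_inv_rev, inv_inv, comm_alpha' hα y]
  have hk2 : tensorAct (y⁻¹ * α y) (tmul y x) = tmul y x := by
    conv_lhs => rw [← h8, ← KEY y y x]
    rw [act_cancel]
  rw [hk2] at hU
  exact inv_eq_iff_eq_inv.mp hU


/-- If `α` is a tensor commuting automorphism of `G`, then `α²` is tensor central iff
`α x ⊗ α y = (y ⊗ x)⁻¹` for all `x y ∈ G`. -/

theorem stmt_15 (G : Type*) [Group G] (α : G ≃* G) (hα : IsTensorCommuting α) :
    IsTensorCentral (α ^ 2) ↔ ∀ x y : G, tmul (α x) (α y) = (tmul y x)⁻¹ := by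
  constructor
  · intro hC a b
    exact forward_dir hα
      (fun u v => by have := hC u v; rwa [pow_two_apply] at this) a b
  · intro H u v
    rw [pow_two_apply]
    exact backward_dir hα H u v
end
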